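/- The elementary group E is maximal among the solvable subgroups of Aut(ℂ²) of derived length 3: the third derived subgroup E⁽³⁾ = [[[E,E],[E,E]], [[E,E],[E,E]]] is trivial, and every subgroup K of Aut(ℂ²) containing E whose third derived subgroup K⁽³⁾ is trivial satisfies K = E. -/

import Mathlib

noncomputable section

open MvPolynomial

/-- A self-map of ℂ² is polynomial if both components are given by polynomials in the
two coordinates. -/
def IsPolyMap (f : ℂ × ℂ → ℂ × ℂ) : Prop :=
  ∃ p q : MvPolynomial (Fin 2) ℂ, ∀ v : ℂ × ℂ,
    f v = (MvPolynomial.eval ![v.1, v.2] p, MvPolynomial.eval ![v.1, v.2] q)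

theorem IsPolyMap.comp {f g : ℂ × ℂ → ℂ × ℂ} (hf : IsPolyMap f) (hg : IsPolyMap g) :
    IsPolyMap (f ∘ g) := by
  obtain ⟨p, q, hpq⟩ := hf
  obtain ⟨p', q', hpq'⟩ := hg
  refine ⟨bind₁ ![p', q'] p, bind₁ ![p', q'] q, fun v => ?_⟩
  have key : ∀ r : MvPolynomial (Fin 2) ℂ,
      MvPolynomial.eval ![v.1, v.2] (bind₁ ![p', q'] r) =
        MvPolynomial.eval
          ![MvPolynomial.eval ![v.1, v.2] p', MvPolynomial.eval ![v.1, v.2] q'] r := by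
    intro r
    have h := MvPolynomial.aeval_bind₁ (S := ℂ) ![v.1, v.2] ![p', q'] r
    have h2 : (fun i => MvPolynomial.aeval ![v.1, v.2] (![p', q'] i)) =
        ![MvPolynomial.eval ![v.1, v.2] p', MvPolynomial.eval ![v.1, v.2] q'] := by
      funext i
      fin_cases i <;> rfl
    rw [h2] at h
    exact h
  calc (f ∘ g) v
      = f (MvPolynomial.eval ![v.1, v.2] p', MvPolynomial.eval ![v.1, v.2] q') := by
        rw [Function.comp_apply, hpq' v]
    _ = (MvPolynomial.eval ![MvPolynomial.eval ![v.1, v.2] p',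
          MvPolynomial.eval ![v.1, v.2] q'] p,
         MvPolynomial.eval ![MvPolynomial.eval ![v.1, v.2] p',
          MvPolynomial.eval ![v.1, v.2] q'] q) := hpq _
    _ = _ := by rw [key p, key q]

/-- The group Aut(ℂ²) of polynomial automorphisms of ℂ², as a subgroup of the
permutation group of ℂ²: the bijections of ℂ² which are polynomial and whose inverse is
polynomial. -/
def AutC2 : Subgroup (Equiv.Perm (ℂ × ℂ)) where
  carrier := { f : Equiv.Perm (ℂ × ℂ) | IsPolyMap f ∧ IsPolyMap f.symm }
  one_mem' := by
    constructor <;>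
      exact ⟨MvPolynomial.X 0, MvPolynomial.X 1, fun v => by simp [Equiv.Perm.one_symm]⟩
  mul_mem' := by
    rintro f g ⟨hf1, hf2⟩ ⟨hg1, hg2⟩
    constructor
    · have h := hf1.comp hg1
      have e : ⇑(f * g) = ⇑f ∘ ⇑g := rfl
      rwa [e]
    · have h := hg2.comp hf2
      have e : ⇑(f * g).symm = ⇑g.symm ∘ ⇑f.symm := rfl
      rwa [e]
  inv_mem' := by
    rintro f ⟨h1, h2⟩
    exact ⟨h2, h1⟩

/-- The elementary subgroup E of Aut(ℂ²): maps (x,y) ↦ (αx + P(y), βy + γ). -/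
def ElemGrp : Subgroup ↥AutC2 where
  carrier := { f | ∃ (α β γ : ℂ) (P : Polynomial ℂ), α ≠ 0 ∧ β ≠ 0 ∧
    ∀ v : ℂ × ℂ, (f : Equiv.Perm (ℂ × ℂ)) v = (α * v.1 + P.eval v.2, β * v.2 + γ) }
  one_mem' := ⟨1, 1, 0, 0, one_ne_zero, one_ne_zero, fun v => by simp⟩
  mul_mem' := by
    rintro f g ⟨α, β, γ, P, hα, hβ, hf⟩ ⟨α', β', γ', P', hα', hβ', hg⟩
    refine ⟨α * α', β * β', β * γ' + γ,
      Polynomial.C α * P' + P.comp (Polynomial.C β' * Polynomial.X + Polynomial.C γ'),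
      mul_ne_zero hα hα', mul_ne_zero hβ hβ', fun v => ?_⟩
    have e : ((f * g : ↥AutC2) : Equiv.Perm (ℂ × ℂ)) v
        = (f : Equiv.Perm (ℂ × ℂ)) ((g : Equiv.Perm (ℂ × ℂ)) v) := rfl
    rw [e, hg v, hf]
    simp only [Polynomial.eval_add, Polynomial.eval_mul, Polynomial.eval_comp,
      Polynomial.eval_C, Polynomial.eval_X, Prod.mk.injEq]
    constructor <;> ring
  inv_mem' := by
    rintro f ⟨α, β, γ, P, hα, hβ, hf⟩
    refine ⟨α⁻¹, β⁻¹, -(β⁻¹ * γ),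
      Polynomial.C (-α⁻¹) * P.comp (Polynomial.C β⁻¹ * Polynomial.X + Polynomial.C (-(β⁻¹ * γ))),
      inv_ne_zero hα, inv_ne_zero hβ, fun v => ?_⟩
    have e : ((f⁻¹ : ↥AutC2) : Equiv.Perm (ℂ × ℂ)) v
        = ((f : Equiv.Perm (ℂ × ℂ))).symm v := rfl
    rw [e, Equiv.symm_apply_eq, hf, Prod.ext_iff]
    simp only [Polynomial.eval_add, Polynomial.eval_mul, Polynomial.eval_comp,
      Polynomial.eval_C, Polynomial.eval_X]
    constructor
    · field_simp; ring
    · field_simp; ring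


namespace ElemMax
open Polynomial
open scoped commutatorElement

lemma eval_aeval_poly (p : MvPolynomial (Fin 2) ℂ) (g : Fin 2 → Polynomial ℂ) (t : ℂ) :
    Polynomial.eval t (MvPolynomial.aeval g p) =
      MvPolynomial.eval (fun i => Polynomial.eval t (g i)) p := by
  induction p using MvPolynomial.induction_on with
  | C a => simp
  | add p q hp hq => simp [hp, hq]
  | mul_X p i hp => simp [hp]

lemma eval_X1 (P : Polynomial ℂ) (x y : ℂ) :
    MvPolynomial.eval ![x, y] (Polynomial.aeval (MvPolynomial.X 1 : MvPolynomial (Fin 2) ℂ) P)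
      = P.eval y := by
  induction P using Polynomial.induction_on' with
  | add p q hp hq => simp [hp, hq]
  | monomial n a => simp [Polynomial.aeval_monomial]

lemma shape_isPolyMap (a b c : ℂ) (P : Polynomial ℂ) :
    IsPolyMap (fun v => (a * v.1 + P.eval v.2, b * v.2 + c)) := by
  refine ⟨MvPolynomial.C a * MvPolynomial.X 0 + Polynomial.aeval (MvPolynomial.X 1) P,
    MvPolynomial.C b * MvPolynomial.X 1 + MvPolynomial.C c, fun v => ?_⟩
  simp [eval_X1]

lemma isPolyMap_congr {f g : ℂ × ℂ → ℂ × ℂ} (h : ∀ v, f v = g v) (hf : IsPolyMap f) :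
    IsPolyMap g := by
  have : f = g := funext h
  rwa [this] at hf

def elemPerm (α β γ : ℂ) (P : Polynomial ℂ) (hα : α ≠ 0) (hβ : β ≠ 0) :
    Equiv.Perm (ℂ × ℂ) where
  toFun v := (α * v.1 + P.eval v.2, β * v.2 + γ)
  invFun v := (α⁻¹ * (v.1 - P.eval (β⁻¹ * (v.2 - γ))), β⁻¹ * (v.2 - γ))
  left_inv v := by
    have h2 : β⁻¹ * (β * v.2 + γ - γ) = v.2 := by field_simp; ring
    simp only [h2]
    have h1 : α⁻¹ * (α * v.1 + P.eval v.2 - P.eval v.2) = v.1 := by field_simp; ring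
    rw [h1]
  right_inv v := by
    have h2 : β * (β⁻¹ * (v.2 - γ)) + γ = v.2 := by field_simp; ring
    simp only [h2]
    have h1 : α * (α⁻¹ * (v.1 - P.eval (β⁻¹ * (v.2 - γ)))) + P.eval (β⁻¹ * (v.2 - γ)) = v.1 := by
      field_simp; ring
    rw [h1]

lemma elemPerm_mem (α β γ : ℂ) (P : Polynomial ℂ) (hα : α ≠ 0) (hβ : β ≠ 0) :
    elemPerm α β γ P hα hβ ∈ AutC2 := by
  constructor
  · exact shape_isPolyMap α β γ P
  · refine isPolyMap_congr (f := fun v =>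
      (α⁻¹ * v.1 + (Polynomial.C (-α⁻¹) *
        P.comp (Polynomial.C β⁻¹ * (Polynomial.X - Polynomial.C γ))).eval v.2,
        β⁻¹ * v.2 + -(β⁻¹ * γ))) (fun v => ?_) (shape_isPolyMap _ _ _ _)
    show _ = (α⁻¹ * (v.1 - P.eval (β⁻¹ * (v.2 - γ))), β⁻¹ * (v.2 - γ))
    simp only [Polynomial.eval_mul, Polynomial.eval_comp, Polynomial.eval_C,
      Polynomial.eval_sub, Polynomial.eval_X, Prod.mk.injEq]
    constructor <;> ring

def elemAut (α β γ : ℂ) (P : Polynomial ℂ) (hα : α ≠ 0) (hβ : β ≠ 0) : ↥AutC2 :=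
  ⟨elemPerm α β γ P hα hβ, elemPerm_mem α β γ P hα hβ⟩

@[simp] lemma elemAut_apply (α β γ : ℂ) (P : Polynomial ℂ) (hα : α ≠ 0) (hβ : β ≠ 0)
    (v : ℂ × ℂ) :
    ((elemAut α β γ P hα hβ : ↥AutC2) : Equiv.Perm (ℂ × ℂ)) v
      = (α * v.1 + P.eval v.2, β * v.2 + γ) := rfl

@[simp] lemma elemAut_symm_apply (α β γ : ℂ) (P : Polynomial ℂ) (hα : α ≠ 0) (hβ : β ≠ 0)
    (v : ℂ × ℂ) :
    (((elemAut α β γ P hα hβ : ↥AutC2) : Equiv.Perm (ℂ × ℂ))).symm v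
      = (α⁻¹ * (v.1 - P.eval (β⁻¹ * (v.2 - γ))), β⁻¹ * (v.2 - γ)) := rfl

lemma elemAut_mem_elem (α β γ : ℂ) (P : Polynomial ℂ) (hα : α ≠ 0) (hβ : β ≠ 0) :
    elemAut α β γ P hα hβ ∈ ElemGrp :=
  ⟨α, β, γ, P, hα, hβ, fun _ => rfl⟩

def HasForm (f : ↥AutC2) (α β γ : ℂ) (P : Polynomial ℂ) : Prop :=
  ∀ v : ℂ × ℂ, (f : Equiv.Perm (ℂ × ℂ)) v = (α * v.1 + P.eval v.2, β * v.2 + γ)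

lemma coe_mul_apply (a b : ↥AutC2) (v : ℂ × ℂ) :
    ((a * b : ↥AutC2) : Equiv.Perm (ℂ × ℂ)) v
      = (a : Equiv.Perm (ℂ × ℂ)) ((b : Equiv.Perm (ℂ × ℂ)) v) := rfl

lemma coe_inv_apply (a : ↥AutC2) (v : ℂ × ℂ) :
    ((a⁻¹ : ↥AutC2) : Equiv.Perm (ℂ × ℂ)) v
      = ((a : Equiv.Perm (ℂ × ℂ))).symm v := rfl

lemma autc2_ext {a b : ↥AutC2} (h : ∀ v, (a : Equiv.Perm (ℂ × ℂ)) v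
    = (b : Equiv.Perm (ℂ × ℂ)) v) : a = b := Subtype.ext (Equiv.ext h)

lemma app_eq {a b : ↥AutC2} (h : a = b) (v : ℂ × ℂ) :
    (a : Equiv.Perm (ℂ × ℂ)) v = (b : Equiv.Perm (ℂ × ℂ)) v := by rw [h]

lemma HasForm.mul {f g : ↥AutC2} {α β γ α' β' γ' : ℂ} {P P' : Polynomial ℂ}
    (hf : HasForm f α β γ P) (hg : HasForm g α' β' γ' P') :
    HasForm (f * g) (α * α') (β * β') (β * γ' + γ)
      (Polynomial.C α * P' + P.comp (Polynomial.C β' * Polynomial.X + Polynomial.C γ')) := by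
  intro v
  rw [coe_mul_apply, hg v, hf]
  simp only [Polynomial.eval_add, Polynomial.eval_mul, Polynomial.eval_comp,
    Polynomial.eval_C, Polynomial.eval_X, Prod.mk.injEq]
  constructor <;> ring

lemma HasForm.inv {f : ↥AutC2} {α β γ : ℂ} {P : Polynomial ℂ}
    (hα : α ≠ 0) (hβ : β ≠ 0) (hf : HasForm f α β γ P) :
    HasForm f⁻¹ α⁻¹ β⁻¹ (-(β⁻¹ * γ))
      (Polynomial.C (-α⁻¹) *
        P.comp (Polynomial.C β⁻¹ * Polynomial.X + Polynomial.C (-(β⁻¹ * γ)))) := by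
  intro v
  rw [coe_inv_apply, Equiv.symm_apply_eq, hf, Prod.ext_iff]
  simp only [Polynomial.eval_add, Polynomial.eval_mul, Polynomial.eval_comp,
    Polynomial.eval_C, Polynomial.eval_X]
  constructor
  · field_simp; ring
  · field_simp; ring


lemma comm_form {f g : ↥AutC2} {α β γ α' β' γ' : ℂ} {P P' : Polynomial ℂ}
    (hα : α ≠ 0) (hβ : β ≠ 0) (hα' : α' ≠ 0) (hβ' : β' ≠ 0)
    (hf : HasForm f α β γ P) (hg : HasForm g α' β' γ' P') :
    ∃ P'' : Polynomial ℂ, HasForm ⁅f, g⁆ 1 1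
      (β * β' * β⁻¹ * -(β'⁻¹ * γ') + (β * β' * -(β⁻¹ * γ) + (β * γ' + γ))) P'' := by
  have h3 := ((hf.mul hg).mul (hf.inv hα hβ)).mul (hg.inv hα' hβ')
  have hA : α * α' * α⁻¹ * α'⁻¹ = 1 := by field_simp
  have hB : β * β' * β⁻¹ * β'⁻¹ = 1 := by field_simp
  rw [hA, hB] at h3
  exact ⟨_, by rw [commutatorElement_def]; exact h3⟩

/-- maps (x,y) ↦ (x + P(y), y + γ) -/
def TriGrp : Subgroup ↥AutC2 where
  carrier := { f | ∃ (γ : ℂ) (P : Polynomial ℂ), HasForm f 1 1 γ P }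
  one_mem' := ⟨0, 0, fun v => by simp [HasForm]⟩
  mul_mem' := by
    rintro f g ⟨γ, P, hf⟩ ⟨γ', P', hg⟩
    have h := hf.mul hg
    rw [show (1 : ℂ) * 1 = 1 from one_mul 1] at h
    exact ⟨_, _, h⟩
  inv_mem' := by
    rintro f ⟨γ, P, hf⟩
    have h := hf.inv one_ne_zero one_ne_zero
    rw [inv_one] at h
    exact ⟨_, _, h⟩

/-- maps (x,y) ↦ (x + P(y), y) -/
def TransGrp : Subgroup ↥AutC2 where
  carrier := { f | ∃ P : Polynomial ℂ, HasForm f 1 1 0 P }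
  one_mem' := ⟨0, fun v => by simp [HasForm]⟩
  mul_mem' := by
    rintro f g ⟨P, hf⟩ ⟨P', hg⟩
    have h := hf.mul hg
    rw [show (1 : ℂ) * 1 = 1 from one_mul 1, show (1 : ℂ) * 0 + 0 = 0 by norm_num] at h
    exact ⟨_, h⟩
  inv_mem' := by
    rintro f ⟨P, hf⟩
    have h := hf.inv one_ne_zero one_ne_zero
    rw [inv_one] at h
    rw [show -((1 : ℂ) * 0) = 0 by norm_num] at h
    exact ⟨_, h⟩

lemma EE_le_Tri : ⁅ElemGrp, ElemGrp⁆ ≤ TriGrp := by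
  rw [Subgroup.commutator_le]
  rintro f ⟨α, β, γ, P, hα, hβ, hf⟩ g ⟨α', β', γ', P', hα', hβ', hg⟩
  obtain ⟨P'', h⟩ := comm_form hα hβ hα' hβ' hf hg
  exact ⟨_, _, h⟩

lemma TriTri_le_Trans : ⁅TriGrp, TriGrp⁆ ≤ TransGrp := by
  rw [Subgroup.commutator_le]
  rintro f ⟨γ, P, hf⟩ g ⟨γ', P', hg⟩
  obtain ⟨P'', h⟩ := comm_form one_ne_zero one_ne_zero one_ne_zero one_ne_zero hf hg
  rw [show (1 : ℂ) * 1 * 1⁻¹ * -(1⁻¹ * γ') + (1 * 1 * -(1⁻¹ * γ) + (1 * γ' + γ)) = 0 by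
    simp] at h
  exact ⟨_, h⟩

lemma trans_comm {f g : ↥AutC2} (hf : f ∈ TransGrp) (hg : g ∈ TransGrp) :
    f * g = g * f := by
  obtain ⟨P, hf⟩ := hf
  obtain ⟨P', hg⟩ := hg
  apply autc2_ext
  intro v
  rw [coe_mul_apply, coe_mul_apply, hf v, hg v, hg, hf]
  simp only [one_mul, add_zero, Prod.mk.injEq]
  exact ⟨by ring, trivial⟩

lemma part1 : ⁅⁅⁅ElemGrp, ElemGrp⁆, ⁅ElemGrp, ElemGrp⁆⁆,
    ⁅⁅ElemGrp, ElemGrp⁆, ⁅ElemGrp, ElemGrp⁆⁆⁆ = (⊥ : Subgroup ↥AutC2) := by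
  rw [eq_bot_iff, Subgroup.commutator_le]
  intro f hf g hg
  have hf' : f ∈ TransGrp :=
    TriTri_le_Trans (Subgroup.commutator_mono EE_le_Tri EE_le_Tri hf)
  have hg' : g ∈ TransGrp :=
    TriTri_le_Trans (Subgroup.commutator_mono EE_le_Tri EE_le_Tri hg)
  exact Subgroup.mem_bot.mpr (commutatorElement_eq_one_iff_mul_comm.mpr (trans_comm hf' hg'))


/-- (x,y) ↦ (x + Q(y), y) -/
def uu (Q : Polynomial ℂ) : ↥AutC2 := elemAut 1 1 0 Q one_ne_zero one_ne_zero
/-- (x,y) ↦ (2x, y) -/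
def mm : ↥AutC2 := elemAut 2 1 0 0 two_ne_zero one_ne_zero
/-- (x,y) ↦ (x, y + δ) -/
def ss (δ : ℂ) : ↥AutC2 := elemAut 1 1 δ 0 one_ne_zero one_ne_zero

@[simp] lemma uu_apply (Q : Polynomial ℂ) (v : ℂ × ℂ) :
    ((uu Q : ↥AutC2) : Equiv.Perm (ℂ × ℂ)) v = (v.1 + Q.eval v.2, v.2) := by
  show ((1:ℂ) * v.1 + Q.eval v.2, (1:ℂ) * v.2 + 0) = _
  rw [one_mul, one_mul, add_zero]

@[simp] lemma uu_symm_apply (Q : Polynomial ℂ) (v : ℂ × ℂ) :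
    (((uu Q : ↥AutC2) : Equiv.Perm (ℂ × ℂ))).symm v = (v.1 - Q.eval v.2, v.2) := by
  show ((1:ℂ)⁻¹ * (v.1 - Q.eval ((1:ℂ)⁻¹ * (v.2 - 0))), (1:ℂ)⁻¹ * (v.2 - 0)) = _
  simp

lemma comm_apply (a b : ↥AutC2) (v : ℂ × ℂ) :
    ((⁅a, b⁆ : ↥AutC2) : Equiv.Perm (ℂ × ℂ)) v
      = (a : Equiv.Perm (ℂ × ℂ)) ((b : Equiv.Perm (ℂ × ℂ))
          (((a : Equiv.Perm (ℂ × ℂ))).symm (((b : Equiv.Perm (ℂ × ℂ))).symm v))) := rfl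

lemma id_mm (Q : Polynomial ℂ) : uu Q = ⁅mm, uu Q⁆ := by
  apply autc2_ext
  intro v
  rw [comm_apply]
  simp only [uu_apply, uu_symm_apply, mm, elemAut_apply, elemAut_symm_apply]
  simp only [Polynomial.eval_zero, inv_one, one_mul, sub_zero, add_zero, Prod.mk.injEq]
  constructor
  · ring
  · trivial

lemma id_ss (δ : ℂ) : ss δ = ⁅elemAut 1 2 0 0 one_ne_zero two_ne_zero, ss δ⁆ := by
  apply autc2_ext
  intro v
  rw [comm_apply]
  simp only [ss, elemAut_apply, elemAut_symm_apply]
  simp only [Polynomial.eval_zero, inv_one, one_mul, sub_zero, add_zero, Prod.mk.injEq]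
  constructor
  · trivial
  · ring

lemma id_diff (P : Polynomial ℂ) (γ : ℂ) :
    uu (P - P.comp (Polynomial.X - Polynomial.C γ)) = ⁅uu P, ss γ⁆ := by
  apply autc2_ext
  intro v
  rw [comm_apply]
  simp only [uu_apply, uu_symm_apply, ss, elemAut_apply, elemAut_symm_apply,
    Polynomial.eval_sub, Polynomial.eval_comp, Polynomial.eval_X, Polynomial.eval_C,
    Polynomial.eval_zero, inv_one, one_mul, sub_zero, add_zero, Prod.mk.injEq]
  constructor
  · ring
  · ring

lemma uu_mul (Q Q' : Polynomial ℂ) : uu Q * uu Q' = uu (Q + Q') := by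
  apply autc2_ext
  intro v
  rw [coe_mul_apply]
  simp only [uu_apply, Polynomial.eval_add, Prod.mk.injEq]
  constructor
  · ring
  · trivial

lemma uu_mem_E1 (Q : Polynomial ℂ) : uu Q ∈ ⁅ElemGrp, ElemGrp⁆ := by
  rw [id_mm]
  exact Subgroup.commutator_mem_commutator (elemAut_mem_elem _ _ _ _ _ _)
    (elemAut_mem_elem _ _ _ _ _ _)

lemma ss_mem_E1 (δ : ℂ) : ss δ ∈ ⁅ElemGrp, ElemGrp⁆ := by
  rw [id_ss]
  exact Subgroup.commutator_mem_commutator (elemAut_mem_elem _ _ _ _ _ _)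
    (elemAut_mem_elem _ _ _ _ _ _)

lemma uu_diff_mem_E2 (P : Polynomial ℂ) (γ : ℂ) :
    uu (P - P.comp (Polynomial.X - Polynomial.C γ)) ∈
      ⁅⁅ElemGrp, ElemGrp⁆, ⁅ElemGrp, ElemGrp⁆⁆ := by
  rw [id_diff]
  exact Subgroup.commutator_mem_commutator (uu_mem_E1 _) (ss_mem_E1 _)

lemma uu_C_mem_E2 (a : ℂ) :
    uu (Polynomial.C a) ∈ ⁅⁅ElemGrp, ElemGrp⁆, ⁅ElemGrp, ElemGrp⁆⁆ := by
  have harg : Polynomial.C a * Polynomial.X -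
      (Polynomial.C a * Polynomial.X).comp (Polynomial.X - Polynomial.C 1)
        = Polynomial.C a := by
    rw [Polynomial.mul_comp, Polynomial.C_comp, Polynomial.X_comp]
    ring_nf
    rw [Polynomial.C_1]
    ring
  have := uu_diff_mem_E2 (Polynomial.C a * Polynomial.X) 1
  rwa [harg] at this
lemma R_coeff (c : ℂ) (n m : ℕ) (hm : n < m) :
    (Polynomial.C c * Polynomial.X ^ (n + 2) -
      (Polynomial.C c * Polynomial.X ^ (n + 2)).comp
        (Polynomial.X - Polynomial.C 1)).coeff m
    = (if m = n + 1 then c * ((n : ℂ) + 2) else 0) := by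
  have hcomp : (Polynomial.C c * Polynomial.X ^ (n + 2)).comp
      (Polynomial.X - Polynomial.C 1)
      = Polynomial.C c * (Polynomial.X + Polynomial.C (-1)) ^ (n + 2) := by
    rw [Polynomial.mul_comp, Polynomial.C_comp, Polynomial.pow_comp, Polynomial.X_comp]
    norm_num [sub_eq_add_neg]
  rw [Polynomial.coeff_sub, hcomp, Polynomial.coeff_C_mul, Polynomial.coeff_C_mul,
    Polynomial.coeff_X_pow, Polynomial.coeff_X_add_C_pow]
  rcases lt_trichotomy m (n + 2) with h1 | h1 | h1
  · have hm1 : m = n + 1 := by omega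
    subst hm1
    have : (n + 2) - (n + 1) = 1 := by omega
    rw [this, Nat.choose_succ_self_right]
    simp only [if_neg (by omega : ¬ n + 1 = n + 2)]
    push_cast
    ring
  · subst h1
    simp only [if_pos rfl, Nat.sub_self, pow_zero, Nat.choose_self,
      if_neg (by omega : ¬ n + 2 = n + 1)]
    push_cast
    ring
  · have h2 : (n + 2) - m = 0 := by omega
    have h3 : (n + 2).choose m = 0 := Nat.choose_eq_zero_of_lt h1
    rw [h3]
    simp only [if_neg (by omega : ¬ m = n + 2), if_neg (by omega : ¬ m = n + 1)]
    push_cast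
    ring

lemma uu_mem_E2 (Q : Polynomial ℂ) :
    uu Q ∈ ⁅⁅ElemGrp, ElemGrp⁆, ⁅ElemGrp, ElemGrp⁆⁆ := by
  suffices H : ∀ (n : ℕ) (Q : Polynomial ℂ), Q.natDegree ≤ n →
      uu Q ∈ ⁅⁅ElemGrp, ElemGrp⁆, ⁅ElemGrp, ElemGrp⁆⁆ from H Q.natDegree Q le_rfl
  intro n
  induction n with
  | zero =>
    intro Q hQ
    rw [Polynomial.eq_C_of_natDegree_le_zero hQ]
    exact uu_C_mem_E2 _
  | succ n ih =>
    intro Q hQ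
    set c := Q.coeff (n + 1) / ((n : ℂ) + 2) with hc
    set P := Polynomial.C c * Polynomial.X ^ (n + 2) with hP
    set R := P - P.comp (Polynomial.X - Polynomial.C 1) with hR
    have hmem : uu R ∈ ⁅⁅ElemGrp, ElemGrp⁆, ⁅ElemGrp, ElemGrp⁆⁆ := uu_diff_mem_E2 P 1
    have hn2 : ((n : ℂ) + 2) ≠ 0 := by
      have h2 : ((n + 2 : ℕ) : ℂ) ≠ 0 := Nat.cast_ne_zero.mpr (by omega)
      push_cast at h2
      exact h2
    have hdeg : (Q - R).natDegree ≤ n := by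
      rw [Polynomial.natDegree_le_iff_coeff_eq_zero]
      intro m hm
      rw [Polynomial.coeff_sub, hR, hP, R_coeff c n m hm]
      rcases eq_or_ne m (n + 1) with rfl | hne
      · rw [if_pos rfl, hc]
        field_simp
        ring
      · rw [if_neg hne, Polynomial.coeff_eq_zero_of_natDegree_lt (by omega : Q.natDegree < m),
          sub_zero]
    have hQR : Q = R + (Q - R) := by ring
    rw [hQR, ← uu_mul]
    exact mul_mem hmem (ih _ hdeg)
lemma coeff_comp_C_mul_X (q : Polynomial ℂ) (a : ℂ) (n : ℕ) :
    (q.comp (Polynomial.C a * Polynomial.X)).coeff n = a ^ n * q.coeff n := by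
  induction q using Polynomial.induction_on' with
  | add p q hp hq => simp [Polynomial.add_comp, hp, hq, mul_add]
  | monomial k c =>
    rw [← Polynomial.C_mul_X_pow_eq_monomial, Polynomial.mul_comp, Polynomial.C_comp,
      Polynomial.pow_comp, Polynomial.X_comp, mul_pow, ← map_pow]
    rw [show Polynomial.C c * (Polynomial.C (a ^ k) * Polynomial.X ^ k)
      = Polynomial.C (c * a ^ k) * Polynomial.X ^ k by rw [map_mul]; ring]
    rw [Polynomial.coeff_C_mul, Polynomial.coeff_C_mul, Polynomial.coeff_X_pow]
    split_ifs with h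
    · subst h; ring
    · ring

lemma cauchy_linear (p : Polynomial ℂ)
    (h : ∀ x c : ℂ, p.eval (x + c) = p.eval x + p.eval c - p.eval 0) :
    ∀ x : ℂ, p.eval x = (p.eval 1 - p.eval 0) * x + p.eval 0 := by
  set q := p - Polynomial.C (p.eval 0) with hq
  have hq0 : ∀ x, q.eval x = p.eval x - p.eval 0 := fun x => by simp [hq]
  have hq2 : ∀ x, q.eval (2 * x) = 2 * q.eval x := by
    intro x
    rw [hq0, hq0, two_mul, h x x]
    ring
  have hcomp : q.comp (Polynomial.C 2 * Polynomial.X) = Polynomial.C 2 * q :=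
    Polynomial.funext fun r => by
      rw [Polynomial.eval_comp, Polynomial.eval_mul, Polynomial.eval_C, Polynomial.eval_X,
        Polynomial.eval_mul, Polynomial.eval_C, hq2 r]
  have hco : ∀ n, (2 : ℂ) ^ n * q.coeff n = 2 * q.coeff n := by
    intro n
    have h2 := congrArg (fun s => Polynomial.coeff s n) hcomp
    simp only [coeff_comp_C_mul_X, Polynomial.coeff_C_mul] at h2
    exact h2
  have hzero : ∀ n, n ≠ 1 → q.coeff n = 0 := by
    intro n hn
    have h2n : (2 : ℂ) ^ n ≠ 2 := by
      intro hh
      have hnat : ((2 ^ n : ℕ) : ℂ) = ((2 ^ 1 : ℕ) : ℂ) := by push_cast; simpa using hh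
      exact hn (Nat.pow_right_injective le_rfl (Nat.cast_inj.mp hnat))
    have h3 : ((2 : ℂ) ^ n - 2) * q.coeff n = 0 := by linear_combination hco n
    rcases mul_eq_zero.mp h3 with h4 | h4
    · exact absurd (by linear_combination h4) h2n
    · exact h4
  have hqC : q = Polynomial.C (q.coeff 1) * Polynomial.X := by
    ext n
    rcases eq_or_ne n 1 with rfl | hn
    · simp
    · rw [hzero n hn, Polynomial.coeff_C_mul, Polynomial.coeff_X,
        if_neg (fun h => hn h.symm), mul_zero]
  intro x
  have h1 : q.eval x = q.coeff 1 * x := by rw [hqC]; simp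
  have e1 : q.eval 1 = q.coeff 1 := by rw [hqC]; simp
  rw [hq0] at e1
  have h2 := hq0 x
  rw [h1, ← e1] at h2
  linear_combination -h2

lemma eval_CX_subst (p : MvPolynomial (Fin 2) ℂ) (c y : ℂ) :
    (MvPolynomial.aeval ![Polynomial.C c, Polynomial.X] p).eval y
      = MvPolynomial.eval ![c, y] p := by
  rw [eval_aeval_poly]
  have h : (fun i => Polynomial.eval y (![Polynomial.C c, Polynomial.X] i)) = ![c, y] := by
    funext i
    fin_cases i <;> simp
  rw [h]

lemma eval_XC_subst (p : MvPolynomial (Fin 2) ℂ) (x y : ℂ) :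
    (MvPolynomial.aeval ![Polynomial.X, Polynomial.C y] p).eval x
      = MvPolynomial.eval ![x, y] p := by
  rw [eval_aeval_poly]
  have h : (fun i => Polynomial.eval x (![Polynomial.X, Polynomial.C y] i)) = ![x, y] := by
    funext i
    fin_cases i <;> simp
  rw [h]
lemma struct (K : Subgroup ↥AutC2) (hEK : ElemGrp ≤ K)
    (hK3 : ⁅⁅⁅K, K⁆, ⁅K, K⁆⁆, ⁅⁅K, K⁆, ⁅K, K⁆⁆⁆ = (⊥ : Subgroup ↥AutC2))
    (f : ↥AutC2) (hfK : f ∈ K) :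
    (∀ x y : ℂ, ((f : Equiv.Perm (ℂ × ℂ)) (x, y)).2 = ((f : Equiv.Perm (ℂ × ℂ)) (0, y)).2) ∧
    (∀ x y : ℂ, ((f : Equiv.Perm (ℂ × ℂ)) (x, y)).1 =
      (((f : Equiv.Perm (ℂ × ℂ)) (1, y)).1 - ((f : Equiv.Perm (ℂ × ℂ)) (0, y)).1) * x
        + ((f : Equiv.Perm (ℂ × ℂ)) (0, y)).1) := by
  have hE2K : ∀ Q, uu Q ∈ ⁅⁅K, K⁆, ⁅K, K⁆⁆ := fun Q =>
    Subgroup.commutator_mono (Subgroup.commutator_mono hEK hEK)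
      (Subgroup.commutator_mono hEK hEK) (uu_mem_E2 Q)
  have hmapK : Subgroup.map (MulAut.conj f).toMonoidHom K = K := by
    ext g
    rw [Subgroup.mem_map]
    constructor
    · rintro ⟨x, hx, rfl⟩
      show (MulAut.conj f) x ∈ K
      rw [MulAut.conj_apply]
      exact mul_mem (mul_mem hfK hx) (inv_mem hfK)
    · intro hg
      refine ⟨f⁻¹ * g * f, mul_mem (mul_mem (inv_mem hfK) hg) hfK, ?_⟩
      show (MulAut.conj f) (f⁻¹ * g * f) = g
      rw [MulAut.conj_apply]
      group
  have hmapK2 : Subgroup.map (MulAut.conj f).toMonoidHom ⁅⁅K, K⁆, ⁅K, K⁆⁆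
      = ⁅⁅K, K⁆, ⁅K, K⁆⁆ := by
    rw [Subgroup.map_commutator, Subgroup.map_commutator, hmapK]
  have hconj : ∀ Q, f * uu Q * f⁻¹ ∈ ⁅⁅K, K⁆, ⁅K, K⁆⁆ := by
    intro Q
    have h1 : (MulAut.conj f).toMonoidHom (uu Q)
        ∈ Subgroup.map (MulAut.conj f).toMonoidHom ⁅⁅K, K⁆, ⁅K, K⁆⁆ :=
      Subgroup.mem_map_of_mem _ (hE2K Q)
    rw [hmapK2] at h1
    have h2 : (MulAut.conj f).toMonoidHom (uu Q) = f * uu Q * f⁻¹ := MulAut.conj_apply f (uu Q)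
    rwa [h2] at h1
  have hcomm : ∀ Q Q', uu Q * (f * uu Q' * f⁻¹) = (f * uu Q' * f⁻¹) * uu Q := by
    intro Q Q'
    apply commutatorElement_eq_one_iff_mul_comm.mp
    have h1 := Subgroup.commutator_mem_commutator (hE2K Q) (hconj Q')
    rw [hK3] at h1
    exact Subgroup.mem_bot.mp h1
  set Fp : Equiv.Perm (ℂ × ℂ) := (f : Equiv.Perm (ℂ × ℂ)) with hFpdef
  set g : Polynomial ℂ → ℂ × ℂ → ℂ × ℂ := fun Q' w =>
    Fp ((Fp.symm w).1 + Q'.eval (Fp.symm w).2, (Fp.symm w).2) with hgdef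
  have hgcomm : ∀ (Q Q' : Polynomial ℂ) (v : ℂ × ℂ),
      ((g Q' v).1 + Q.eval (g Q' v).2, (g Q' v).2) = g Q' (v.1 + Q.eval v.2, v.2) := by
    intro Q Q' v
    have h := app_eq (hcomm Q Q') v
    simp only [coe_mul_apply, coe_inv_apply, uu_apply] at h
    simp only [hgdef]
    exact h
  have hB : ∀ (Q' : Polynomial ℂ) (x y : ℂ),
      g Q' (x, y) = (x + (g Q' (0, y)).1, (g Q' (0, y)).2) := by
    intro Q' x y
    have h := hgcomm (Polynomial.C x) Q' (0, y)
    simp only [Polynomial.eval_C] at h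
    rw [zero_add] at h
    rw [← h]
    have : (g Q' (0, y)).1 + x = x + (g Q' (0, y)).1 := add_comm _ _
    rw [this]
  have hC : ∀ y : ℂ, ∀ Q' : Polynomial ℂ, (g Q' (0, y)).2 = y := by
    intro y Q'
    have h := hgcomm Polynomial.X Q' (0, y)
    simp only [Polynomial.eval_X] at h
    rw [zero_add] at h
    rw [hB Q' 0 y, hB Q' y y] at h
    have h1 := congrArg Prod.fst h
    simp only at h1
    -- h1 : 0 + (g Q' (0,y)).1 + (g Q' (0,y)).2 = y + (g Q' (0,y)).1
    linear_combination h1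
  have hgform : ∀ (Q' : Polynomial ℂ) (w : ℂ × ℂ),
      g Q' w = (w.1 + (g Q' (0, w.2)).1, w.2) := by
    intro Q' w
    have h := hB Q' w.1 w.2
    rw [hC w.2 Q'] at h
    simpa using h
  have hmain : ∀ (Q' : Polynomial ℂ) (z : ℂ × ℂ),
      Fp (z.1 + Q'.eval z.2, z.2) = ((Fp z).1 + (g Q' (0, (Fp z).2)).1, (Fp z).2) := by
    intro Q' z
    have h := hgform Q' (Fp z)
    simp only [hgdef] at h ⊢
    rw [Equiv.symm_apply_apply] at h
    exact h
  constructor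
  · intro x y
    have h := congrArg Prod.snd (hmain (Polynomial.C x) (0, y))
    simpa using h
  · -- Cauchy equation then linearity
    have hsnd : ∀ x y : ℂ, (Fp (x, y)).2 = (Fp (0, y)).2 := by
      intro x y
      have h := congrArg Prod.snd (hmain (Polynomial.C x) (0, y))
      simpa using h
    have hcauchy : ∀ x c y : ℂ, (Fp (x + c, y)).1
        = (Fp (x, y)).1 + (Fp (c, y)).1 - (Fp (0, y)).1 := by
      intro x c y
      have h1 := congrArg Prod.fst (hmain (Polynomial.C c) (x, y))
      have h2 := congrArg Prod.fst (hmain (Polynomial.C c) (0, y))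
      simp only [Polynomial.eval_C] at h1 h2
      rw [zero_add] at h2
      have hs : (Fp (x, y)).2 = (Fp (0, y)).2 := hsnd x y
      rw [hs] at h1
      linear_combination h1 - h2
    intro x y
    obtain ⟨pF, qF, hpq⟩ := f.2.1
    have hev : ∀ t : ℂ, (MvPolynomial.aeval ![Polynomial.X, Polynomial.C y] pF).eval t
        = (Fp (t, y)).1 := by
      intro t
      rw [eval_XC_subst, hpq (t, y)]
    have hc : ∀ s c : ℂ,
        (MvPolynomial.aeval ![Polynomial.X, Polynomial.C y] pF).eval (s + c)
          = (MvPolynomial.aeval ![Polynomial.X, Polynomial.C y] pF).eval s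
            + (MvPolynomial.aeval ![Polynomial.X, Polynomial.C y] pF).eval c
            - (MvPolynomial.aeval ![Polynomial.X, Polynomial.C y] pF).eval 0 := by
      intro s c
      rw [hev, hev, hev, hev]
      exact hcauchy s c y
    have h := cauchy_linear _ hc x
    simp only [hev] at h
    exact h

end ElemMax

/-- (Déserti.)  The elementary group `E` is maximal among the solvable subgroups of
`Aut(ℂ²)` of derived length 3: the third derived subgroup of `E` is trivial, and every
subgroup of `Aut(ℂ²)` containing `E` whose third derived subgroup is trivial equals
`E`. -/
theorem elem_maximal_solvable_length_three :
    ⁅⁅⁅ElemGrp, ElemGrp⁆, ⁅ElemGrp, ElemGrp⁆⁆,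
      ⁅⁅ElemGrp, ElemGrp⁆, ⁅ElemGrp, ElemGrp⁆⁆⁆ = (⊥ : Subgroup ↥AutC2) ∧
    (∀ K : Subgroup ↥AutC2, ElemGrp ≤ K →
      ⁅⁅⁅K, K⁆, ⁅K, K⁆⁆, ⁅⁅K, K⁆, ⁅K, K⁆⁆⁆ = (⊥ : Subgroup ↥AutC2) → K = ElemGrp) := by
  constructor
  · exact ElemMax.part1
  · intro K hEK hK3
    refine le_antisymm (fun f hfK => ?_) hEK
    obtain ⟨hsnd, hlin⟩ := ElemMax.struct K hEK hK3 f hfK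
    set Fp : Equiv.Perm (ℂ × ℂ) := (f : Equiv.Perm (ℂ × ℂ)) with hFpdef
    -- the "slope" is everywhere nonzero
    have hA : ∀ y : ℂ, (Fp (1, y)).1 - (Fp (0, y)).1 ≠ 0 := by
      intro y h0
      have h1 : Fp (1, y) = Fp (0, y) := by
        apply Prod.ext
        · exact sub_eq_zero.mp h0
        · exact hsnd 1 y
      have h2 := Fp.injective h1
      have h3 := congrArg Prod.fst h2
      simp at h3
    obtain ⟨pF, qF, hpq⟩ := f.2.1
    obtain ⟨pG, qG, hpq'⟩ := f.2.2
    -- slope polynomial is constant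
    set pA : Polynomial ℂ := MvPolynomial.aeval ![Polynomial.C 1, Polynomial.X] pF -
        MvPolynomial.aeval ![Polynomial.C 0, Polynomial.X] pF with hpAdef
    have hevalA : ∀ y : ℂ, pA.eval y = (Fp (1, y)).1 - (Fp (0, y)).1 := by
      intro y
      rw [hpAdef, Polynomial.eval_sub, ElemMax.eval_CX_subst, ElemMax.eval_CX_subst,
        hpq (1, y), hpq (0, y)]
    have hdegA : pA.natDegree = 0 := by
      by_contra hne
      obtain ⟨z, hz⟩ := Complex.exists_root
        (Polynomial.natDegree_pos_iff_degree_pos.mp (Nat.pos_of_ne_zero hne))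
      exact hA z (by rw [← hevalA z]; exact hz)
    have hpAC : pA = Polynomial.C (pA.coeff 0) := Polynomial.eq_C_of_natDegree_eq_zero hdegA
    have hAconst : ∀ y : ℂ, (Fp (1, y)).1 - (Fp (0, y)).1 = pA.coeff 0 := by
      intro y
      rw [← hevalA y]
      conv_lhs => rw [hpAC]
      exact Polynomial.eval_C
    have hα : pA.coeff 0 ≠ 0 := by
      rw [← hAconst 0]
      exact hA 0
    -- second coordinate: affine polynomial
    set pψ : Polynomial ℂ := MvPolynomial.aeval ![Polynomial.C 0, Polynomial.X] qF with hpψdef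
    have hevalψ : ∀ y : ℂ, pψ.eval y = (Fp (0, y)).2 := by
      intro y
      rw [hpψdef, ElemMax.eval_CX_subst, hpq (0, y)]
    set pχ : Polynomial ℂ := MvPolynomial.aeval ![Polynomial.C 0, Polynomial.X] qG with hpχdef
    have hevalχ : ∀ y : ℂ, pχ.eval y = (Fp.symm (0, y)).2 := by
      intro y
      rw [hpχdef, ElemMax.eval_CX_subst, hpq' (0, y)]
    have hψχ : ∀ t : ℂ, pψ.eval (pχ.eval t) = t := by
      intro t
      rw [hevalχ, hevalψ]
      have h1 : (Fp ((Fp.symm (0, t)).1, (Fp.symm (0, t)).2)).2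
          = (Fp (0, (Fp.symm (0, t)).2)).2 := hsnd _ _
      rw [← h1, Prod.mk.eta, Equiv.apply_symm_apply]
    have hcompψχ : pψ.comp pχ = Polynomial.X := Polynomial.funext fun t => by
      rw [Polynomial.eval_comp, hψχ, Polynomial.eval_X]
    have hdegψ : pψ.natDegree = 1 := by
      have h1 := congrArg Polynomial.natDegree hcompψχ
      rw [Polynomial.natDegree_comp, Polynomial.natDegree_X] at h1
      exact Nat.dvd_one.mp ⟨pχ.natDegree, h1.symm⟩
    have hform := Polynomial.eq_X_add_C_of_natDegree_le_one (le_of_eq hdegψ)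
    have hβ : pψ.coeff 1 ≠ 0 := by
      intro h0
      rw [h0] at hform
      rw [hform] at hdegψ
      simp at hdegψ
    have hψaff : ∀ y : ℂ, pψ.eval y = pψ.coeff 1 * y + pψ.coeff 0 := by
      intro y
      conv_lhs => rw [hform]
      simp
    -- conclude membership in ElemGrp
    refine ⟨pA.coeff 0, pψ.coeff 1, pψ.coeff 0,
      MvPolynomial.aeval ![Polynomial.C 0, Polynomial.X] pF, hα, hβ, ?_⟩
    intro v
    obtain ⟨x, y⟩ := v
    have hevalB : (MvPolynomial.aeval ![Polynomial.C 0, Polynomial.X] pF).eval y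
        = (Fp (0, y)).1 := by
      rw [ElemMax.eval_CX_subst, hpq (0, y)]
    apply Prod.ext
    · show (Fp (x, y)).1 = _
      rw [hlin x y, hAconst y, hevalB]
    · show (Fp (x, y)).2 = _
      rw [hsnd x y, ← hevalψ y, hψaff y]
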